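/- (BEST theorem, path-counting version.) Let X be a finite directed graph in which every vertex has nonzero in-degree equal to its out-degree, fix a vertex x₀, let 𝓔 be the set of Eulerian paths of X that start and end at x₀ (two Eulerian paths being counted as different whenever they differ as sequences of vertices, even if cyclically equivalent), and let 𝓣 be the set of directed spanning trees of X rooted at x₀ with all edges directed toward x₀. Then #𝓔 = #𝓣 · deg(x₀) · ∏_{x ∈ V(X)} (deg(x) − 1)!, where deg(x) denotes the common in/out-degree of x. -/

import Mathlib

/-- `l` is an Eulerian path from `x₀` to `x₁` in the directed graph with adjacency
relation `adj`: it starts at `x₀`, ends at `x₁`, and its consecutive pairs are pairwise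
distinct and are exactly the edges of the graph (each edge traversed exactly once).
Two Eulerian paths are distinct whenever they differ as sequences of vertices. -/
def IsEulerianFromTo {V : Type*} (adj : V → V → Prop) (x₀ x₁ : V) (l : List V) : Prop :=
  l.head? = some x₀ ∧ l.getLast? = some x₁ ∧
    (l.zip l.tail).Nodup ∧ ∀ p : V × V, p ∈ l.zip l.tail ↔ adj p.1 p.2

/-- `T` (a set of directed edges of the graph `adj`) is a directed spanning tree rooted
at `x₀` with all edges directed toward `x₀`: every vertex other than `x₀` has exactly
one outgoing edge in `T`, `x₀` has none, and from every vertex there is a directed path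
in `T` to `x₀`. -/
def IsSpanningTreeTo {V : Type*} (adj : V → V → Prop) (x₀ : V) (T : Set (V × V)) : Prop :=
  (∀ p ∈ T, adj p.1 p.2) ∧
    (∀ x : V, x ≠ x₀ → ∃! y : V, (x, y) ∈ T) ∧
    (∀ y : V, (x₀, y) ∉ T) ∧
    ∀ x : V, Relation.ReflTransGen (fun a c => (a, c) ∈ T) x x₀

namespace BestAux
set_option linter.unusedSectionVars false
variable {α : Type*} [DecidableEq α]

/-- The list of consecutive pairs (edges) of a list. -/
def steps (l : List α) : List (α × α) := l.zip l.tail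

@[simp] lemma steps_nil : steps ([] : List α) = [] := rfl
@[simp] lemma steps_single (a : α) : steps [a] = [] := rfl
@[simp] lemma steps_cons₂ (a b : α) (t : List α) :
    steps (a :: b :: t) = (a, b) :: steps (b :: t) := rfl

/-- The successive out-neighbours used at `x` along the list `l`, in order. -/
def succs (x : α) (l : List α) : List α :=
  ((steps l).filter (fun p => p.1 = x)).map Prod.snd

/-- The in-neighbours used at `v` along the list `l`, in order. -/
def preds (v : α) (l : List α) : List α :=
  ((steps l).filter (fun p => p.2 = v)).map Prod.fst

@[simp] lemma succs_nil (x : α) : succs x [] = [] := rfl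
@[simp] lemma succs_single (x a : α) : succs x [a] = [] := rfl

lemma succs_cons₂ (x a b : α) (t : List α) :
    succs x (a :: b :: t) = if a = x then b :: succs x (b :: t) else succs x (b :: t) := by
  simp only [succs, steps_cons₂, List.filter_cons]
  split <;> simp_all

lemma mem_succs {x b : α} {l : List α} : b ∈ succs x l ↔ (x, b) ∈ steps l := by
  simp only [succs, List.mem_map, List.mem_filter, decide_eq_true_eq]
  constructor
  · rintro ⟨⟨p1, p2⟩, ⟨hp, h1⟩, h2⟩; simp only at h1 h2; subst h1; subst h2; exact hp
  · intro h; exact ⟨(x, b), ⟨h, rfl⟩, rfl⟩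

lemma mem_preds {v a : α} {l : List α} : a ∈ preds v l ↔ (a, v) ∈ steps l := by
  simp only [preds, List.mem_map, List.mem_filter, decide_eq_true_eq]
  constructor
  · rintro ⟨⟨p1, p2⟩, ⟨hp, h1⟩, h2⟩; simp only at h1 h2; subst h1; subst h2; exact hp
  · intro h; exact ⟨(a, v), ⟨h, rfl⟩, rfl⟩

lemma nodup_succs {x : α} {l : List α} (h : (steps l).Nodup) : (succs x l).Nodup := by
  refine List.Nodup.map_on ?_ (h.filter _)
  rintro ⟨p1, p2⟩ hp ⟨q1, q2⟩ hq hpq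
  simp only [List.mem_filter, decide_eq_true_eq] at hp hq
  simp only at hpq
  simp [hp.2, hq.2, hpq]

lemma nodup_preds {v : α} {l : List α} (h : (steps l).Nodup) : (preds v l).Nodup := by
  refine List.Nodup.map_on ?_ (h.filter _)
  rintro ⟨p1, p2⟩ hp ⟨q1, q2⟩ hq hpq
  simp only [List.mem_filter, decide_eq_true_eq] at hp hq
  simp only at hpq
  simp [hp.2, hq.2, hpq]

lemma mem_of_mem_steps : ∀ {l : List α} {p : α × α}, p ∈ steps l → p.1 ∈ l ∧ p.2 ∈ l := by
  intro l
  induction l with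
  | nil => simp
  | cons a t ih =>
    intro p hp
    cases t with
    | nil => simp at hp
    | cons b u =>
      rw [steps_cons₂] at hp
      rcases List.mem_cons.mp hp with h | h
      · subst h; constructor <;> simp
      · obtain ⟨h1, h2⟩ := ih h
        exact ⟨List.mem_cons_of_mem _ h1, List.mem_cons_of_mem _ h2⟩

lemma succs_eq_nil_of_not_mem {x : α} {l : List α} (h : x ∉ l) : succs x l = [] := by
  rw [List.eq_nil_iff_forall_not_mem]
  intro b hb
  exact h (mem_of_mem_steps (mem_succs.mp hb)).1

lemma succs_cons (x c : α) (l : List α) (h : l ≠ []) :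
    succs x (c :: l) = (if c = x then [l.head h] else []) ++ succs x l := by
  cases l with
  | nil => simp at h
  | cons b u => rw [succs_cons₂]; split <;> simp

lemma eq_of_head?_eq_of_succs_eq (l : List α) : ∀ l' : List α, l.head? = l'.head? →
    (∀ x, succs x l = succs x l') → l = l' := by
  induction l with
  | nil => intro l' h _; cases l' <;> simp_all
  | cons a t ih =>
    intro l' h hs
    cases l' with
    | nil => simp at h
    | cons a' t' =>
      simp only [List.head?_cons, Option.some.injEq] at h; subst h
      cases t with
      | nil =>
        cases t' with
        | nil => rfl
        | cons b' u' =>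
          have h1 := hs a
          rw [succs_single, succs_cons₂, if_pos rfl] at h1
          simp at h1
      | cons b u =>
        cases t' with
        | nil =>
          have h1 := hs a
          rw [succs_single, succs_cons₂, if_pos rfl] at h1
          simp at h1
        | cons b' u' =>
          have h1 := hs a
          rw [succs_cons₂, succs_cons₂, if_pos rfl, if_pos rfl] at h1
          obtain ⟨hb, h2⟩ := List.cons_eq_cons.mp h1
          subst hb
          have key : (b :: u) = (b :: u') := by
            apply ih
            · rfl
            · intro x
              by_cases hx : a = x
              · subst hx; exact h2
              · have h3 := hs x
                rwa [succs_cons₂, succs_cons₂, if_neg hx, if_neg hx] at h3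
          rw [key]

lemma steps_append_singleton : ∀ (l : List α) (h : l ≠ []) (y : α),
    steps (l ++ [y]) = steps l ++ [(l.getLast h, y)] := by
  intro l
  induction l with
  | nil => simp
  | cons a t ih =>
    intro _ y
    cases t with
    | nil => simp [steps]
    | cons b u =>
      have hne : (b :: u : List α) ≠ [] := by simp
      have H := ih hne y
      rw [show ((a :: b :: u) ++ [y] : List α) = a :: b :: (u ++ [y]) by simp]
      rw [steps_cons₂, steps_cons₂]
      rw [show (b :: (u ++ [y]) : List α) = (b :: u) ++ [y] by simp, H]
      simp [List.getLast_cons]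

lemma succs_append_singleton (x : α) (l : List α) (h : l ≠ []) (y : α) :
    succs x (l ++ [y]) = succs x l ++ (if l.getLast h = x then [y] else []) := by
  unfold succs
  rw [steps_append_singleton l h y, List.filter_append, List.map_append]
  congr 1
  by_cases hc : l.getLast h = x <;> simp [hc]

lemma map_fst_steps : ∀ l : List α, (steps l).map Prod.fst = l.dropLast := by
  intro l
  induction l with
  | nil => rfl
  | cons a t ih =>
    cases t with
    | nil => rfl
    | cons b u => rw [steps_cons₂, List.map_cons, ih]; rfl

lemma map_snd_steps (l : List α) : (steps l).map Prod.snd = l.tail :=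
  List.map_snd_zip (by cases l <;> simp)

lemma length_succs (x : α) (l : List α) :
    (succs x l).length = List.countP (fun a => a = x) l.dropLast := by
  unfold succs
  rw [List.length_map, ← List.countP_eq_length_filter, ← map_fst_steps, List.countP_map]
  rfl

lemma length_preds (v : α) (l : List α) :
    (preds v l).length = List.countP (fun a => a = v) l.tail := by
  unfold preds
  rw [List.length_map, ← List.countP_eq_length_filter, ← map_snd_steps, List.countP_map]
  rfl

lemma count_balance (l : List α) (h : l ≠ []) (v : α) :
    List.countP (fun a => a = v) l.dropLast + (if l.getLast h = v then 1 else 0)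
      = (if l.head h = v then 1 else 0) + List.countP (fun a => a = v) l.tail := by
  have h1 : l.dropLast ++ [l.getLast h] = l := List.dropLast_append_getLast h
  have h2 : l.head h :: l.tail = l := List.cons_head_tail h
  have e1 := congrArg (List.countP (fun a => decide (a = v))) h1
  have e2 := congrArg (List.countP (fun a => decide (a = v))) h2
  rw [List.countP_append] at e1
  rw [List.countP_cons] at e2
  rw [show (List.countP (fun a => decide (a = v)) [l.getLast h])
      = if l.getLast h = v then 1 else 0 by simp [List.countP_cons]] at e1
  rw [e1, ← e2]
  by_cases hc : l.head h = v <;> simp [hc, add_comm]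

lemma length_le_card_of_nodup {l : List α} {s : Finset α} (h : l.Nodup)
    (hs : ∀ a ∈ l, a ∈ s) : l.length ≤ s.card := by
  rw [← List.toFinset_card_of_nodup h]
  exact Finset.card_le_card (fun a ha => hs a (List.mem_toFinset.mp ha))

lemma nat_card_perm (l₀ : List α) (h : l₀.Nodup) :
    Nat.card {m : List α // m.Nodup ∧ ∀ y, y ∈ m ↔ y ∈ l₀} = (l₀.length).factorial := by
  have e : ∀ m : List α, (m.Nodup ∧ ∀ y, y ∈ m ↔ y ∈ l₀) ↔ m ∈ l₀.permutations.toFinset := by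
    intro m
    rw [List.mem_toFinset, List.mem_permutations]
    constructor
    · rintro ⟨hn, hm⟩
      exact (List.perm_ext_iff_of_nodup hn h).mpr hm
    · intro hp
      exact ⟨hp.nodup_iff.mpr h, fun y => hp.mem_iff⟩
  rw [Nat.card_congr (Equiv.subtypeEquivRight e)]
  rw [Nat.card_eq_fintype_card, Fintype.card_coe]
  rw [List.toFinset_card_of_nodup (List.nodup_permutations l₀ h), List.length_permutations]

lemma nat_card_perm_last (l₀ : List α) (h : l₀.Nodup) (y₀ : α) (hy : y₀ ∈ l₀) :
    Nat.card {m : List α // m.Nodup ∧ (∀ y, y ∈ m ↔ y ∈ l₀) ∧ m.getLast? = some y₀}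
      = (l₀.length - 1).factorial := by
  have key : Nat.card {m : List α // m.Nodup ∧ (∀ y, y ∈ m ↔ y ∈ l₀) ∧ m.getLast? = some y₀}
      = Nat.card {m : List α // m.Nodup ∧ ∀ y, y ∈ m ↔ y ∈ l₀.erase y₀} := by
    apply Nat.card_congr
    refine ⟨fun m => ⟨m.1.dropLast, ?_, ?_⟩, fun m => ⟨m.1 ++ [y₀], ?_, ?_, ?_⟩, ?_, ?_⟩
    · exact List.Nodup.sublist (List.dropLast_sublist _) m.2.1
    · obtain ⟨m, hn, hm, hl⟩ := m
      have hsplit : m.dropLast ++ [y₀] = m := List.dropLast_append_getLast? y₀ hl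
      have hy₀ : y₀ ∉ m.dropLast := by
        intro hc
        have h2 := hsplit ▸ hn
        rw [List.nodup_append] at h2
        exact h2.2.2 _ hc _ (by simp) rfl
      intro z
      rw [h.mem_erase_iff]
      constructor
      · intro hz
        exact ⟨fun hzy => hy₀ (hzy ▸ hz),
          (hm z).mp (List.Sublist.mem hz (List.dropLast_sublist m))⟩
      · rintro ⟨hzy, hz⟩
        have hzm : z ∈ m := (hm z).mpr hz
        rw [← hsplit, List.mem_append] at hzm
        rcases hzm with h1 | h1
        · exact h1
        · simp at h1; exact absurd h1 hzy
    · -- nodup of m ++ [y₀]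
      obtain ⟨m, hn, hm⟩ := m
      rw [List.nodup_append]
      refine ⟨hn, List.nodup_singleton _, ?_⟩
      intro z hz b hz' hzb
      simp at hz'
      subst hz'; subst hzb
      have := (hm z).mp hz
      rw [h.mem_erase_iff] at this
      exact this.1 rfl
    · -- membership
      obtain ⟨m, hn, hm⟩ := m
      intro z
      simp only [List.mem_append, List.mem_singleton, hm, h.mem_erase_iff]
      constructor
      · rintro (⟨_, hz⟩ | rfl) <;> [exact hz; exact hy]
      · intro hz
        by_cases hzy : z = y₀
        · exact Or.inr hzy
        · exact Or.inl ⟨hzy, hz⟩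
    · exact List.getLast?_concat
    · intro m
      apply Subtype.ext
      exact List.dropLast_append_getLast? y₀ m.2.2.2
    · intro m
      apply Subtype.ext
      exact List.dropLast_concat
  rw [key, nat_card_perm _ (h.erase y₀)]
  congr 1
  rw [List.length_erase_of_mem hy]

lemma length_steps (l : List α) (h : l ≠ []) : l.length = (steps l).length + 1 := by
  cases l with
  | nil => simp at h
  | cons a t =>
    simp only [steps, List.length_zip, List.tail_cons, List.length_cons]
    omega

lemma getLast?_not_mem_of_proper_prefix {p m : List α} (hp : p <+: m) (hne : p ≠ m)
    (hn : m.Nodup) {c : α} (hc : m.getLast? = some c) : c ∉ p := by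
  obtain ⟨r, rfl⟩ := hp
  have hr : r ≠ [] := by rintro rfl; simp at hne
  rw [List.getLast?_append_of_ne_nil _ hr] at hc
  have hcr : c ∈ r := List.mem_of_getLast? hc
  rw [List.nodup_append] at hn
  exact fun hcp => hn.2.2 _ hcp _ hcr rfl

lemma getLast?_succs_of_suffix {a b : α} {s l : List α}
    (hsuf : (a :: b :: s) <:+ l) (ha : a ∉ b :: s) : (succs a l).getLast? = some b := by
  induction l with
  | nil => have := hsuf.length_le; simp at this
  | cons c l' ih =>
    rcases List.suffix_cons_iff.mp hsuf with h | h
    · obtain ⟨rfl, rfl⟩ : c = a ∧ l' = b :: s := by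
        constructor <;> [exact (List.cons_eq_cons.mp h).1.symm;
          exact (List.cons_eq_cons.mp h).2.symm]
      rw [succs_cons₂, if_pos rfl, succs_eq_nil_of_not_mem ha]; rfl
    · have hb := ih h
      have hne : l' ≠ [] := by
        rintro rfl; have := h.length_le; simp at this
      rw [succs_cons a c l' hne]
      have hsne : succs a l' ≠ [] := by
        intro hc; rw [hc] at hb; simp at hb
      rw [List.getLast?_append_of_ne_nil _ hsne, hb]

section Graph
variable {V : Type*} [Fintype V] [DecidableEq V]

def outs (adj : V → V → Prop) [DecidableRel adj] (x : V) : Finset V :=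
  Finset.univ.filter fun y => adj x y

def ins (adj : V → V → Prop) [DecidableRel adj] (v : V) : Finset V :=
  Finset.univ.filter fun y => adj y v

def lastEdges (x₀ : V) (σ : V → List V) : Set (V × V) :=
  {p | p.1 ≠ x₀ ∧ (σ p.1).getLast? = some p.2}

def Good (adj : V → V → Prop) (x₀ : V) (σ : V → List V) : Prop :=
  (∀ x, (σ x).Nodup ∧ ∀ y, (y ∈ σ x ↔ adj x y)) ∧
    IsSpanningTreeTo adj x₀ (lastEdges x₀ σ)

theorem good_of_eulerian {adj : V → V → Prop} {x₀ : V} (hdeg : ∀ x : V, ∃ y, adj x y)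
    {l : List V} (hl : IsEulerianFromTo adj x₀ x₀ l) : Good adj x₀ (fun x => succs x l) := by
  obtain ⟨hhead, hlast, hnodup, hmem⟩ := hl
  have hsteps : ∀ p : V × V, p ∈ steps l ↔ adj p.1 p.2 := hmem
  have hnodup' : (steps l).Nodup := hnodup
  have henum : ∀ x, (succs x l).Nodup ∧ ∀ y, (y ∈ succs x l ↔ adj x y) := by
    intro x
    refine ⟨nodup_succs hnodup', fun y => ?_⟩
    rw [mem_succs]; exact hsteps (x, y)
  refine ⟨henum, ?_, ?_, ?_, ?_⟩
  · rintro ⟨x, y⟩ ⟨-, hxy⟩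
    exact ((henum x).2 y).mp (List.mem_of_getLast? hxy)
  · intro x hx
    have hne : succs x l ≠ [] := by
      obtain ⟨y, hy⟩ := hdeg x
      intro hc
      have hmem' : y ∈ succs x l := mem_succs.mpr ((hsteps (x, y)).mpr hy)
      rw [hc] at hmem'; simp at hmem'
    refine ⟨(succs x l).getLast hne, ⟨hx, List.getLast?_eq_getLast hne⟩, ?_⟩
    rintro y ⟨-, hy⟩
    rw [List.getLast?_eq_getLast hne] at hy
    exact (Option.some_inj.mp hy).symm
  · rintro y ⟨hy, -⟩; exact hy rfl
  · intro x
    have hlne : l ≠ [] := by rintro rfl; simp at hhead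
    have hx₀ : l.getLast? = some x₀ := hlast
    have reach : ∀ s : List V, s <:+ l → ∀ x ∈ s,
        Relation.ReflTransGen (fun a c => (a, c) ∈ lastEdges x₀ (fun v => succs v l)) x x₀ := by
      intro s
      induction s with
      | nil => intro _ x hx; simp at hx
      | cons a s ih =>
        intro hsuf x hx
        have hs_suf : s <:+ l := (List.suffix_cons a s).trans hsuf
        rcases List.mem_cons.mp hx with rfl | hxs
        · by_cases hax : x = x₀
          · subst hax; exact .refl
          · cases s with
            | nil =>
              exfalso
              obtain ⟨t, ht⟩ := hsuf
              rw [← ht, List.getLast?_concat] at hx₀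
              exact hax (Option.some_inj.mp hx₀)
            | cons b s' =>
              by_cases hamem : x ∈ b :: s'
              · exact ih hs_suf x hamem
              · have hT : (x, b) ∈ lastEdges x₀ (fun v => succs v l) :=
                  ⟨hax, getLast?_succs_of_suffix hsuf hamem⟩
                exact Relation.ReflTransGen.head hT (ih hs_suf b (by simp))
        · exact ih hs_suf x hxs
    obtain ⟨y, hy⟩ := hdeg x
    have hxl : x ∈ l := (mem_of_mem_steps ((hsteps (x, y)).mpr hy)).1
    exact reach l (List.suffix_refl l) x hxl

theorem exists_eulerian {adj : V → V → Prop} [DecidableRel adj] {x₀ : V}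
    (hdeg : ∀ x : V, (outs adj x).Nonempty ∧ (outs adj x).card = (ins adj x).card)
    {σ : V → List V} (hσ : Good adj x₀ σ) :
    ∃ l : List V, IsEulerianFromTo adj x₀ x₀ l ∧ ∀ x, succs x l = σ x := by
  obtain ⟨henum, hT_adj, hT_unique, hT_root, hT_reach⟩ := hσ
  have hlen : ∀ x, (σ x).length = (outs adj x).card := by
    intro x
    rw [← List.toFinset_card_of_nodup (henum x).1]
    congr 1
    ext y
    simp [List.mem_toFinset, (henum x).2 y, outs]
  set W : Set (List V) := {l | l.head? = some x₀ ∧ (steps l).Nodup ∧ ∀ x, succs x l <+: σ x}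
    with hWdef
  have hW0 : [x₀] ∈ W := ⟨rfl, by simp, fun x => by simp [List.nil_prefix]⟩
  have hWne : ∀ l ∈ W, l ≠ [] := by
    rintro l hl rfl
    simpa using hl.1
  have hbound : ∀ l ∈ W, l.length ≤ Fintype.card (V × V) + 1 := by
    intro l hl
    rw [length_steps l (hWne l hl)]
    exact Nat.add_le_add_right hl.2.1.length_le_card 1
  obtain ⟨l, hlW, hlmax⟩ : ∃ l ∈ W, ∀ l' ∈ W, l'.length ≤ l.length := by
    have h1 : ((fun l : List V => l.length) '' W).Nonempty := ⟨1, [x₀], hW0, rfl⟩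
    have h2 : BddAbove ((fun l : List V => l.length) '' W) :=
      ⟨Fintype.card (V × V) + 1, by rintro n ⟨l, hl, rfl⟩; exact hbound l hl⟩
    obtain ⟨l, hl, hlen'⟩ := Nat.sSup_mem h1 h2
    refine ⟨l, hl, fun l' hl' => ?_⟩
    have h3 := le_csSup h2 (Set.mem_image_of_mem _ hl')
    rw [← hlen'] at h3
    exact h3
  obtain ⟨hhead, hnodup, hpre⟩ := hlW
  have hlne : l ≠ [] := by rintro rfl; simp at hhead
  have hheadeq : l.head hlne = x₀ := by
    have h := List.head?_eq_head hlne
    rw [hhead] at h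
    exact (Option.some_inj.mp h).symm
  have hsteps_adj : ∀ p : V × V, p ∈ steps l → adj p.1 p.2 := by
    rintro ⟨a, b⟩ hp
    have hb : b ∈ succs a l := mem_succs.mpr hp
    exact ((henum a).2 b).mp ((hpre a).subset hb)
  set z := l.getLast hlne with hz
  -- Step 1: all out-edges at the endpoint are used
  have hfull_z : succs z l = σ z := by
    by_contra hne
    obtain ⟨r, hr⟩ := hpre z
    have hrne : r ≠ [] := by rintro rfl; exact hne (by simpa using hr)
    obtain ⟨y, r', rfl⟩ : ∃ y r', r = y :: r' := by
      cases r with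
      | nil => exact absurd rfl hrne
      | cons y r' => exact ⟨y, r', rfl⟩
    have hyne : (z, y) ∉ steps l := by
      intro hc
      have h1 : y ∈ succs z l := mem_succs.mpr hc
      have h2 : (σ z).Nodup := (henum z).1
      rw [← hr, List.nodup_append] at h2
      exact h2.2.2 _ h1 _ (by simp) rfl
    have hWy : (l ++ [y]) ∈ W := by
      refine ⟨?_, ?_, ?_⟩
      · rw [List.head?_append_of_ne_nil _ hlne]; exact hhead
      · rw [steps_append_singleton l hlne y, List.nodup_append]
        refine ⟨hnodup, List.nodup_singleton _, ?_⟩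
        rintro p hp q hp' hpq
        simp only [List.mem_singleton] at hp'
        subst hp'; subst hpq
        exact hyne hp
      · intro x
        rw [succs_append_singleton x l hlne y]
        by_cases hx : l.getLast hlne = x
        · rw [if_pos hx]
          subst hx
          rw [← hr]
          exact ⟨r', by simp [hz]⟩
        · rw [if_neg hx, List.append_nil]; exact hpre x
    have hcontra := hlmax _ hWy
    simp at hcontra
  -- Step 2: the endpoint is x₀
  have hBle : ∀ v, (preds v l).length ≤ (ins adj v).card := by
    intro v
    apply length_le_card_of_nodup (nodup_preds hnodup)
    intro a ha
    have h := hsteps_adj (a, v) (mem_preds.mp ha)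
    simp only [ins, Finset.mem_filter, Finset.mem_univ, true_and]
    exact h
  have hzx₀ : z = x₀ := by
    by_contra hzx
    have hbal := count_balance l hlne z
    rw [if_pos hz.symm, if_neg (by rw [hheadeq]; exact fun h => hzx h.symm)] at hbal
    have h1 : (succs z l).length = (outs adj z).card := by rw [hfull_z, hlen z]
    have h2 := hBle z
    rw [length_preds] at h2
    rw [length_succs] at h1
    have h3 := (hdeg z).2
    omega
  have hgl : l.getLast hlne = x₀ := by rw [← hz]; exact hzx₀
  have hbal_all : ∀ v, List.countP (fun a => a = v) l.dropLast
      = List.countP (fun a => a = v) l.tail := by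
    intro v
    have hbal := count_balance l hlne v
    rw [hgl, hheadeq] at hbal
    by_cases hv : x₀ = v
    · simp only [if_pos hv] at hbal; omega
    · simp only [if_neg hv] at hbal; omega
  -- Step 3: every out-edge everywhere is used
  have hfullx₀ : succs x₀ l = σ x₀ := hzx₀ ▸ hfull_z
  have hfull : ∀ v, succs v l = σ v := by
    intro v
    by_contra hv
    have prop : ∀ a, Relation.ReflTransGen (fun a c => (a, c) ∈ lastEdges x₀ σ) a x₀ →
        succs a l ≠ σ a → False := by
      intro a h
      induction h using Relation.ReflTransGen.head_induction_on with
      | refl => exact fun hda => hda hfullx₀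
      | @head a c hstep htail ih =>
        intro hda
        apply ih
        obtain ⟨hax₀, hlast_ac⟩ := hstep
        have hcnot : (a, c) ∉ steps l := by
          intro hc
          have h1 : c ∈ succs a l := mem_succs.mpr hc
          exact getLast?_not_mem_of_proper_prefix (hpre a) hda (henum a).1 hlast_ac h1
        have haIn : a ∈ ins adj c := by
          simp only [ins, Finset.mem_filter, Finset.mem_univ, true_and]
          exact hT_adj (a, c) ⟨hax₀, hlast_ac⟩
        have hin : (preds c l).length < (ins adj c).card := by
          have hsub : (preds c l).toFinset ⊆ (ins adj c).erase a := by
            intro b hb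
            rw [List.mem_toFinset] at hb
            have hbc := mem_preds.mp hb
            rw [Finset.mem_erase]
            refine ⟨fun hba => hcnot (hba ▸ hbc), ?_⟩
            simp only [ins, Finset.mem_filter, Finset.mem_univ, true_and]
            exact hsteps_adj _ hbc
          have hcard : (preds c l).length = (preds c l).toFinset.card :=
            (List.toFinset_card_of_nodup (nodup_preds hnodup)).symm
          have hpos : 0 < (ins adj c).card := Finset.card_pos.mpr ⟨a, haIn⟩
          calc (preds c l).length = (preds c l).toFinset.card := hcard
            _ ≤ ((ins adj c).erase a).card := Finset.card_le_card hsub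
            _ < (ins adj c).card := by rw [Finset.card_erase_of_mem haIn]; omega
        intro hceq
        have h1 : (succs c l).length = (outs adj c).card := by rw [hceq, hlen]
        rw [length_succs] at h1
        rw [length_preds] at hin
        have h2 := hbal_all c
        have h3 := (hdeg c).2
        omega
    exact prop v (hT_reach v) hv
  refine ⟨l, ⟨hhead, ?_, hnodup, ?_⟩, hfull⟩
  · rw [List.getLast?_eq_getLast hlne, hgl]
  · rintro ⟨a, b⟩
    constructor
    · intro hp
      exact ((henum a).2 b).mp (hfull a ▸ mem_succs.mpr hp)
    · intro hadj
      have hb : b ∈ σ a := ((henum a).2 b).mpr hadj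
      rw [← hfull a] at hb
      exact mem_succs.mp hb

/-- Lists enumerating the out-neighbours of `x`, with prescribed last element `w`
when `x ≠ x₀`. -/
def A (adj : V → V → Prop) [DecidableRel adj] (x₀ x w : V) : Type _ :=
  {m : List V // m.Nodup ∧ (∀ y, y ∈ m ↔ y ∈ (outs adj x).toList) ∧
    (x ≠ x₀ → m.getLast? = some w)}

lemma card_A {adj : V → V → Prop} [DecidableRel adj] (x₀ x w : V)
    (hw : x ≠ x₀ → w ∈ outs adj x) :
    Nat.card (A adj x₀ x w)
      = if x = x₀ then (outs adj x).card.factorial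
        else ((outs adj x).card - 1).factorial := by
  by_cases hx : x = x₀
  · rw [if_pos hx]
    have e : ∀ m : List V, (m.Nodup ∧ (∀ y, y ∈ m ↔ y ∈ (outs adj x).toList) ∧
        (x ≠ x₀ → m.getLast? = some w)) ↔
        (m.Nodup ∧ ∀ y, y ∈ m ↔ y ∈ (outs adj x).toList) := by
      intro m
      constructor
      · rintro ⟨h1, h2, -⟩; exact ⟨h1, h2⟩
      · rintro ⟨h1, h2⟩; exact ⟨h1, h2, fun h => absurd hx h⟩
    rw [show A adj x₀ x w = {m : List V // m.Nodup ∧ (∀ y, y ∈ m ↔ y ∈ (outs adj x).toList) ∧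
        (x ≠ x₀ → m.getLast? = some w)} from rfl]
    rw [Nat.card_congr (Equiv.subtypeEquivRight e),
      nat_card_perm _ (Finset.nodup_toList _), Finset.length_toList]
  · rw [if_neg hx]
    have hts : w ∈ (outs adj x).toList := Finset.mem_toList.mpr (hw hx)
    have e : ∀ m : List V, (m.Nodup ∧ (∀ y, y ∈ m ↔ y ∈ (outs adj x).toList) ∧
        (x ≠ x₀ → m.getLast? = some w)) ↔
        (m.Nodup ∧ (∀ y, y ∈ m ↔ y ∈ (outs adj x).toList) ∧ m.getLast? = some w) := by
      intro m
      constructor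
      · rintro ⟨h1, h2, h3⟩; exact ⟨h1, h2, h3 hx⟩
      · rintro ⟨h1, h2, h3⟩; exact ⟨h1, h2, fun _ => h3⟩
    rw [show A adj x₀ x w = {m : List V // m.Nodup ∧ (∀ y, y ∈ m ↔ y ∈ (outs adj x).toList) ∧
        (x ≠ x₀ → m.getLast? = some w)} from rfl]
    rw [Nat.card_congr (Equiv.subtypeEquivRight e),
      nat_card_perm_last _ (Finset.nodup_toList _) _ hts, Finset.length_toList]

/-- The fiber of `lastEdges` over a spanning tree `T` is equivalent to the product of
the sets of orderings with prescribed last edges. -/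
noncomputable def fiberEquiv (adj : V → V → Prop) [DecidableRel adj] (x₀ : V)
    (T : Set (V × V)) (hT : IsSpanningTreeTo adj x₀ T) (t : V → V)
    (htmem : ∀ x, x ≠ x₀ → (x, t x) ∈ T)
    (htuniq : ∀ x, x ≠ x₀ → ∀ z, (x, z) ∈ T → z = t x) :
    {σ : {σ : V → List V // Good adj x₀ σ} // lastEdges x₀ σ.1 = T} ≃ ∀ x, A adj x₀ x (t x) := by
  refine ⟨fun σ x => ⟨σ.1.1 x, (σ.1.2.1 x).1, ?_, ?_⟩, fun g => ⟨⟨fun x => (g x).1, ?_⟩, ?_⟩, ?_, ?_⟩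
  · intro y
    rw [(σ.1.2.1 x).2 y, Finset.mem_toList]
    simp [outs]
  · intro hx
    have h1 : (x, t x) ∈ lastEdges x₀ σ.1.1 := σ.2.symm ▸ htmem x hx
    exact h1.2
  · -- Goodness of the reassembled function
    have key : lastEdges x₀ (fun x => (g x).1) = T := by
      ext ⟨a, b⟩
      simp only [lastEdges, Set.mem_setOf_eq]
      constructor
      · rintro ⟨ha, hb⟩
        have h1 := (g a).2.2.2 ha
        obtain rfl : b = t a := by rw [h1] at hb; exact (Option.some_inj.mp hb).symm
        exact htmem a ha
      · intro hab
        have ha : a ≠ x₀ := by rintro rfl; exact hT.2.2.1 b hab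
        obtain rfl : b = t a := htuniq a ha b hab
        exact ⟨ha, (g a).2.2.2 ha⟩
    refine ⟨fun x => ⟨(g x).2.1, fun y => ?_⟩, key ▸ hT⟩
    rw [(g x).2.2.1 y, Finset.mem_toList]
    simp [outs]
  · -- fiber condition
    ext ⟨a, b⟩
    simp only [lastEdges, Set.mem_setOf_eq]
    constructor
    · rintro ⟨ha, hb⟩
      have h1 := (g a).2.2.2 ha
      obtain rfl : b = t a := by rw [h1] at hb; exact (Option.some_inj.mp hb).symm
      exact htmem a ha
    · intro hab
      have ha : a ≠ x₀ := by rintro rfl; exact hT.2.2.1 b hab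
      obtain rfl : b = t a := htuniq a ha b hab
      exact ⟨ha, (g a).2.2.2 ha⟩
  · intro σ
    apply Subtype.ext
    apply Subtype.ext
    rfl
  · intro g
    funext x
    apply Subtype.ext
    rfl

theorem card_good {adj : V → V → Prop} [DecidableRel adj] {x₀ : V}
    (hne : ∀ x : V, (outs adj x).Nonempty) :
    Nat.card {σ : V → List V // Good adj x₀ σ}
      = Nat.card {T : Set (V × V) // IsSpanningTreeTo adj x₀ T} *
          ((outs adj x₀).card.factorial *
            ∏ x ∈ Finset.univ.erase x₀, ((outs adj x).card - 1).factorial) := by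
  classical
  set d : V → ℕ := fun x => if x = x₀ then (outs adj x₀).card.factorial
    else ((outs adj x).card - 1).factorial with hd
  set c : ℕ := ∏ x : V, d x with hcdef
  have tspec : ∀ (T : {T : Set (V × V) // IsSpanningTreeTo adj x₀ T}) (x : V), x ≠ x₀ →
      ∃ y, (x, y) ∈ T.1 ∧ ∀ z, (x, z) ∈ T.1 → z = y := by
    intro T x h
    obtain ⟨y, hy, hy'⟩ := T.2.2.1 x h
    exact ⟨y, hy, hy'⟩
  set tsucc : {T : Set (V × V) // IsSpanningTreeTo adj x₀ T} → V → V :=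
    fun T x => if h : x = x₀ then x₀ else (tspec T x h).choose with htsucc
  have tmem : ∀ T (x : V) (h : x ≠ x₀), (x, tsucc T x) ∈ T.1 := by
    intro T x h
    simp only [htsucc, dif_neg h]
    exact (tspec T x h).choose_spec.1
  have tuniq : ∀ T (x : V) (h : x ≠ x₀) (z : V), (x, z) ∈ T.1 → z = tsucc T x := by
    intro T x h z hz
    simp only [htsucc, dif_neg h]
    exact (tspec T x h).choose_spec.2 z hz
  have hc : ∀ T, Nat.card (∀ x, A adj x₀ x (tsucc T x)) = c := by
    intro T
    rw [Nat.card_pi]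
    apply Finset.prod_congr rfl
    intro x _
    rw [card_A x₀ x (tsucc T x) (fun h => by
      have := T.2.1 (x, tsucc T x) (tmem T x h)
      simp only [outs, Finset.mem_filter, Finset.mem_univ, true_and]
      exact this)]
    by_cases hx : x = x₀ <;> simp [hd, hx]
  have hcpos : 0 < c := by
    rw [hcdef]
    apply Finset.prod_pos
    intro x _
    rw [hd]
    by_cases hx : x = x₀ <;> simp [hx, Nat.factorial_pos]
  haveI : Finite (Set (V × V)) := inferInstance
  haveI : Fintype {T : Set (V × V) // IsSpanningTreeTo adj x₀ T} := Fintype.ofFinite _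
  set f : {σ : V → List V // Good adj x₀ σ} → {T : Set (V × V) // IsSpanningTreeTo adj x₀ T} :=
    fun σ => ⟨lastEdges x₀ σ.1, σ.2.2⟩ with hf
  have fibE : ∀ T, {σ : {σ : V → List V // Good adj x₀ σ} // f σ = T} ≃ ∀ x, A adj x₀ x (tsucc T x) := by
    intro T
    refine Equiv.trans (Equiv.subtypeEquivRight ?_)
      (fiberEquiv adj x₀ T.1 T.2 (tsucc T) (fun x h => tmem T x h) (fun x h z hz => tuniq T x h z hz))
    intro σ
    rw [hf, Subtype.ext_iff]
  have hfin : ∀ T, Finite (∀ x, A adj x₀ x (tsucc T x)) := by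
    intro T
    apply Nat.finite_of_card_ne_zero
    rw [hc T]
    omega
  have main : Nat.card {σ : V → List V // Good adj x₀ σ}
      = Nat.card {T : Set (V × V) // IsSpanningTreeTo adj x₀ T} * c := by
    calc Nat.card {σ : V → List V // Good adj x₀ σ}
        = Nat.card (Σ T : {T : Set (V × V) // IsSpanningTreeTo adj x₀ T},
            {σ : {σ : V → List V // Good adj x₀ σ} // f σ = T}) :=
          (Nat.card_congr (Equiv.sigmaFiberEquiv f)).symm
      _ = Nat.card ({T : Set (V × V) // IsSpanningTreeTo adj x₀ T} × Fin c) := by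
          apply Nat.card_congr
          refine Equiv.trans (Equiv.sigmaCongrRight fun T => ?_)
            (Equiv.sigmaEquivProd _ (Fin c))
          haveI := hfin T
          haveI : Finite {σ : {σ : V → List V // Good adj x₀ σ} // f σ = T} :=
            Finite.of_equiv _ (fibE T).symm
          exact (fibE T).trans (Finite.equivFinOfCardEq (hc T))
      _ = Nat.card {T : Set (V × V) // IsSpanningTreeTo adj x₀ T} * c := by
          rw [Nat.card_prod, Nat.card_eq_fintype_card (α := Fin c), Fintype.card_fin]
  rw [main]
  congr 1
  rw [hcdef, ← Finset.mul_prod_erase Finset.univ d (Finset.mem_univ x₀)]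
  congr 1
  · simp [hd]
  · apply Finset.prod_congr rfl
    intro x hx
    simp only [hd]
    rw [if_neg (Finset.mem_erase.mp hx).1]

end Graph

end BestAux

/-- BEST theorem, path-counting version: if every vertex of a finite directed graph has
nonzero in-degree equal to its out-degree, then the number of Eulerian paths starting and
ending at `x₀` equals `#𝓣 · deg x₀ · ∏_x (deg x − 1)!`, where `𝓣` is the set of directed
spanning trees rooted at `x₀` (edges toward `x₀`) and `deg x` is the out-degree of `x`. -/
theorem statement5 (V : Type*) [Fintype V] (adj : V → V → Prop)
    (hdeg : ∀ x : V, 0 < Nat.card {y : V // adj x y} ∧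
      Nat.card {y : V // adj x y} = Nat.card {y : V // adj y x})
    (x₀ : V) :
    Nat.card {l : List V // IsEulerianFromTo adj x₀ x₀ l} =
      Nat.card {T : Set (V × V) // IsSpanningTreeTo adj x₀ T} *
        Nat.card {y : V // adj x₀ y} *
        ∏ x : V, (Nat.card {y : V // adj x y} - 1).factorial := by
  letI := Classical.decEq V
  letI : DecidableRel adj := fun a b => Classical.dec _
  have hout : ∀ x : V, Nat.card {y : V // adj x y} = (BestAux.outs adj x).card := by
    intro x
    have e : ∀ y : V, adj x y ↔ y ∈ BestAux.outs adj x := by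
      intro y; simp [BestAux.outs]
    rw [Nat.card_congr (Equiv.subtypeEquivRight e), Nat.card_eq_fintype_card, Fintype.card_coe]
  have hin : ∀ x : V, Nat.card {y : V // adj y x} = (BestAux.ins adj x).card := by
    intro x
    have e : ∀ y : V, adj y x ↔ y ∈ BestAux.ins adj x := by
      intro y; simp [BestAux.ins]
    rw [Nat.card_congr (Equiv.subtypeEquivRight e), Nat.card_eq_fintype_card, Fintype.card_coe]
  have hdeg' : ∀ x : V, (BestAux.outs adj x).Nonempty ∧
      (BestAux.outs adj x).card = (BestAux.ins adj x).card := by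
    intro x
    obtain ⟨h1, h2⟩ := hdeg x
    rw [hout x] at h1 h2
    rw [hin x] at h2
    exact ⟨Finset.card_pos.mp h1, h2⟩
  have e1 : Nat.card {l : List V // IsEulerianFromTo adj x₀ x₀ l}
      = Nat.card {σ : V → List V // BestAux.Good adj x₀ σ} := by
    apply Nat.card_congr
    refine Equiv.ofBijective
      (fun l => ⟨fun x => BestAux.succs x l.1, BestAux.good_of_eulerian ?_ l.2⟩) ⟨?_, ?_⟩
    · intro x
      obtain ⟨y, hy⟩ := (hdeg' x).1
      exact ⟨y, by simpa [BestAux.outs] using hy⟩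
    · intro l l' h
      apply Subtype.ext
      apply BestAux.eq_of_head?_eq_of_succs_eq
      · rw [l.2.1, l'.2.1]
      · intro x
        exact congrFun (congrArg Subtype.val h) x
    · intro σ
      obtain ⟨l, hE, hs⟩ := BestAux.exists_eulerian hdeg' σ.2
      exact ⟨⟨l, hE⟩, Subtype.ext (funext hs)⟩
  rw [e1, BestAux.card_good (fun x => (hdeg' x).1)]
  rw [hout x₀]
  simp_rw [hout]
  have d0pos : 0 < (BestAux.outs adj x₀).card := Finset.card_pos.mpr (hdeg' x₀).1
  rw [← Finset.mul_prod_erase Finset.univ _ (Finset.mem_univ x₀)]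
  rw [← Nat.mul_factorial_pred d0pos.ne']
  ring
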